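/- Let P be a probability distribution on a finite set V with max_{v∈V} P(v) ≤ θ for some θ ∈ (0,1]. Then P can be written as a convex combination of probability distributions, each of which is uniform on its support, where each support has size exactly ⌊1/θ⌋. -/

import Mathlib

open scoped Classical
open Finset

lemma aux_decomp {V : Type*} [Fintype V] (k : ℕ) (hk : 0 < k) :
    ∀ (m : ℕ) (P : V → ℝ),
      (Finset.univ.filter (fun v => 0 < P v ∧ P v < 1/(k:ℝ))).card = m →
      (∀ v, 0 ≤ P v) → (∑ v, P v = 1) → (∀ v, P v ≤ 1/(k:ℝ)) →
      ∃ (n : ℕ) (α : Fin n → ℝ) (S : Fin n → Finset V),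
        (∀ i, 0 ≤ α i) ∧ (∑ i, α i = 1) ∧ (∀ i, (S i).card = k) ∧
        (∀ v, P v = ∑ i, α i * (if v ∈ S i then (1 : ℝ) / (S i).card else 0)) := by
  have hkk : (0:ℝ) < (k:ℝ) := by exact_mod_cast hk
  intro m
  induction m using Nat.strong_induction_on with
  | _ m ih =>
  intro P hm hP0 hPsum hPbd
  rcases Nat.eq_zero_or_pos m with hm0 | hmpos
  · -- base case: everything in support equals 1/k
    subst hm0
    rw [Finset.card_eq_zero] at hm
    have hcap : ∀ v, 0 < P v → P v = 1/(k:ℝ) := by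
      intro v hv
      by_contra hne
      have : v ∈ Finset.univ.filter (fun v => 0 < P v ∧ P v < 1/(k:ℝ)) :=
        Finset.mem_filter.mpr ⟨Finset.mem_univ v, hv, lt_of_le_of_ne (hPbd v) hne⟩
      rw [hm] at this; simp at this
    set S₀ := Finset.univ.filter (fun v => 0 < P v) with hS₀
    have hsum' : ∑ v ∈ S₀, P v = 1 := by
      rw [← hPsum]
      apply Finset.sum_subset (Finset.subset_univ _)
      intro v _ hv
      simp only [hS₀, Finset.mem_filter, Finset.mem_univ, true_and, not_lt] at hv
      linarith [hP0 v]
    have hval : ∀ v ∈ S₀, P v = 1/(k:ℝ) := by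
      intro v hv
      simp only [hS₀, Finset.mem_filter] at hv
      exact hcap v hv.2
    have hcardn : S₀.card = k := by
      rw [Finset.sum_congr rfl hval, Finset.sum_const, nsmul_eq_mul] at hsum'
      field_simp at hsum'
      exact_mod_cast hsum'
    refine ⟨1, fun _ => 1, fun _ => S₀, by intro i; norm_num, by simp, by simp [hcardn], ?_⟩
    intro v
    rw [Fin.sum_univ_one, hcardn]
    by_cases hv : v ∈ S₀
    · simp only [hv, if_true, one_mul]
      exact hval v hv
    · simp only [hv, if_false, mul_zero]
      simp only [hS₀, Finset.mem_filter, Finset.mem_univ, true_and, not_lt] at hv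
      linarith [hP0 v]
  · -- inductive step
    set supp := Finset.univ.filter (fun v => 0 < P v) with hsupp
    set caps := Finset.univ.filter (fun v => P v = 1/(k:ℝ)) with hcaps
    have hcs : caps ⊆ supp := by
      intro v hv
      simp only [hcaps, Finset.mem_filter] at hv
      simp only [hsupp, Finset.mem_filter, Finset.mem_univ, true_and]
      rw [hv.2]; positivity
    have hsumsupp : ∑ v ∈ supp, P v = 1 := by
      rw [← hPsum]
      apply Finset.sum_subset (Finset.subset_univ _)
      intro v _ hv
      simp only [hsupp, Finset.mem_filter, Finset.mem_univ, true_and, not_lt] at hv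
      linarith [hP0 v]
    have hcapscard : caps.card ≤ k := by
      have h1 : (caps.card : ℝ) * (1/(k:ℝ)) ≤ 1 := by
        have := Finset.sum_le_sum_of_subset_of_nonneg hcs
          (fun v _ _ => hP0 v)
        rw [hsumsupp] at this
        calc (caps.card : ℝ) * (1/(k:ℝ)) = ∑ _v ∈ caps, (1/(k:ℝ)) := by
              rw [Finset.sum_const, nsmul_eq_mul]
          _ = ∑ v ∈ caps, P v := Finset.sum_congr rfl (fun v hv => by
              simp only [hcaps, Finset.mem_filter] at hv; exact hv.2.symm)
          _ ≤ 1 := this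
      by_contra hlt
      push_neg at hlt
      have : (k:ℝ) < (caps.card : ℝ) := by exact_mod_cast hlt
      have h2 : (1:ℝ) < (caps.card : ℝ) * (1/(k:ℝ)) := by
        rw [mul_one_div, lt_div_iff₀ hkk, one_mul]
        exact this
      linarith
    have hsuppcard : k ≤ supp.card := by
      have h1 : (1:ℝ) ≤ (supp.card : ℝ) * (1/(k:ℝ)) := by
        calc (1:ℝ) = ∑ v ∈ supp, P v := hsumsupp.symm
          _ ≤ ∑ _v ∈ supp, (1/(k:ℝ)) := Finset.sum_le_sum (fun v _ => hPbd v)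
          _ = (supp.card : ℝ) * (1/(k:ℝ)) := by rw [Finset.sum_const, nsmul_eq_mul]
      by_contra hlt
      push_neg at hlt
      have : (supp.card : ℝ) < (k:ℝ) := by exact_mod_cast hlt
      have : (supp.card : ℝ) * (1/(k:ℝ)) < 1 := by
        rw [mul_one_div, div_lt_one hkk]; exact this
      linarith
    obtain ⟨S, hcapsS, hSsupp, hScard⟩ :=
      Finset.exists_subsuperset_card_eq hcs hcapscard hsuppcard
    have hSne : S.Nonempty := Finset.card_pos.mp (hScard ▸ hk)
    -- supp \ S nonempty
    have hT : (supp \ S).Nonempty := by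
      rw [Finset.sdiff_nonempty]
      intro hsub
      have heq : supp = S := Finset.Subset.antisymm hsub hSsupp
      -- then every element of S has P v = 1/k, hence noncap set empty, m = 0
      have hall : ∀ v ∈ S, P v = 1/(k:ℝ) := by
        by_contra hne
        push_neg at hne
        obtain ⟨w, hwS, hwne⟩ := hne
        have hlt : ∑ v ∈ S, P v < ∑ _v ∈ S, (1/(k:ℝ)) := by
          apply Finset.sum_lt_sum (fun v _ => hPbd v)
          exact ⟨w, hwS, lt_of_le_of_ne (hPbd w) hwne⟩
        have hsS : ∑ v ∈ S, P v = 1 := heq ▸ hsumsupp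
        have hconst : ∑ _v ∈ S, (1/(k:ℝ)) = 1 := by
          rw [Finset.sum_const, nsmul_eq_mul, hScard]
          field_simp
        rw [hsS, hconst] at hlt
        exact lt_irrefl _ hlt
      have : Finset.univ.filter (fun v => 0 < P v ∧ P v < 1/(k:ℝ)) = ∅ := by
        rw [Finset.filter_eq_empty_iff]
        intro v _
        rintro ⟨h1, h2⟩
        have : v ∈ supp := by simp [hsupp, h1]
        rw [heq] at this
        rw [hall v this] at h2
        exact lt_irrefl _ h2
      rw [this] at hm
      simp at hm
      omega
    obtain ⟨v₀, hv₀S, hv₀min⟩ := Finset.exists_min_image S P hSne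
    obtain ⟨v₁, hv₁T, hv₁max⟩ := Finset.exists_max_image (supp \ S) P hT
    set a := P v₀ with ha
    set b := P v₁ with hb
    have hv₁supp : v₁ ∈ supp := (Finset.mem_sdiff.mp hv₁T).1
    have hv₁nS : v₁ ∉ S := (Finset.mem_sdiff.mp hv₁T).2
    have ha0 : 0 < a := by
      have := hSsupp hv₀S
      simp only [hsupp, Finset.mem_filter] at this
      exact this.2
    have hb0 : 0 < b := by
      simp only [hsupp, Finset.mem_filter] at hv₁supp
      exact hv₁supp.2
    have hbcap : b < 1/(k:ℝ) := by
      rcases lt_or_eq_of_le (hPbd v₁) with h | h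
      · exact h
      · exfalso; apply hv₁nS; apply hcapsS
        simp [hcaps, h]
    set α := min ((k:ℝ) * a) (1 - (k:ℝ) * b) with hαdef
    have hα0 : 0 < α := by
      apply lt_min
      · positivity
      · have : (k:ℝ) * b < 1 := by
          calc (k:ℝ) * b < (k:ℝ) * (1/(k:ℝ)) := by
                exact mul_lt_mul_of_pos_left hbcap hkk
            _ = 1 := by field_simp
        linarith
    have hα1 : α < 1 := by
      calc α ≤ 1 - (k:ℝ) * b := min_le_right _ _
        _ < 1 := by nlinarith
    have h1α : (0:ℝ) < 1 - α := by linarith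
    set Q := fun v => (P v - α * (if v ∈ S then 1/(k:ℝ) else 0)) / (1-α) with hQ
    -- Q properties
    have hQ0 : ∀ v, 0 ≤ Q v := by
      intro v
      apply div_nonneg _ (le_of_lt h1α)
      by_cases hv : v ∈ S
      · simp only [hv, if_true]
        have h1 : a ≤ P v := hv₀min v hv
        have h2 : α ≤ (k:ℝ) * a := min_le_left _ _
        have : α * (1/(k:ℝ)) ≤ a := by
          rw [mul_one_div, div_le_iff₀ hkk]
          linarith [mul_comm a (k:ℝ)]
        linarith
      · simp only [hv, if_false, mul_zero, sub_zero]
        exact hP0 v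
    have hQbd : ∀ v, Q v ≤ 1/(k:ℝ) := by
      intro v
      rw [div_le_iff₀ h1α]
      by_cases hv : v ∈ S
      · simp only [hv, if_true]
        have hid : α * (1/(k:ℝ)) + (1/(k:ℝ)) * (1-α) = 1/(k:ℝ) := by ring
        linarith [hPbd v]
      · simp only [hv, if_false, mul_zero, sub_zero]
        have hPv : P v ≤ b ∨ P v = 0 := by
          by_cases hvs : v ∈ supp
          · left; exact hv₁max v (Finset.mem_sdiff.mpr ⟨hvs, hv⟩)
          · right
            simp only [hsupp, Finset.mem_filter, Finset.mem_univ, true_and, not_lt] at hvs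
            linarith [hP0 v]
        have hαb : α ≤ 1 - (k:ℝ) * b := min_le_right _ _
        rcases hPv with h | h
        · have h2 : P v * (k:ℝ) ≤ 1 - α := by
            nlinarith [mul_le_mul_of_nonneg_right h hkk.le]
          calc P v = P v * (k:ℝ) * (1/(k:ℝ)) := by field_simp
            _ ≤ (1-α) * (1/(k:ℝ)) := by
                apply mul_le_mul_of_nonneg_right h2; positivity
            _ = 1/(k:ℝ) * (1-α) := by ring
        · rw [h]; positivity
    have hQsum : ∑ v, Q v = 1 := by
      simp only [hQ]
      rw [← Finset.sum_div]
      rw [div_eq_one_iff_eq (by linarith)]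
      rw [Finset.sum_sub_distrib, hPsum, ← Finset.mul_sum]
      have : ∑ v, (if v ∈ S then 1/(k:ℝ) else 0) = 1 := by
        rw [Finset.sum_ite_mem, Finset.univ_inter, Finset.sum_const, nsmul_eq_mul, hScard]
        field_simp
      rw [this, mul_one]
    -- cap preserved, zero preserved
    have hQcap : ∀ v, P v = 1/(k:ℝ) → Q v = 1/(k:ℝ) := by
      intro v hv
      have hvS : v ∈ S := hcapsS (by simp [hcaps, hv])
      simp only [hQ, hvS, if_true, hv]
      field_simp
    have hQzero : ∀ v, P v = 0 → Q v = 0 := by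
      intro v hv
      have hvS : v ∉ S := by
        intro h
        have := hSsupp h
        simp only [hsupp, Finset.mem_filter] at this
        linarith [this.2]
      simp [hQ, hvS, hv]
    -- new noncap set strictly smaller
    set newnc := Finset.univ.filter (fun v => 0 < Q v ∧ Q v < 1/(k:ℝ)) with hnn
    set oldnc := Finset.univ.filter (fun v => 0 < P v ∧ P v < 1/(k:ℝ)) with hon
    have hsubnc : newnc ⊆ oldnc := by
      intro v hv
      simp only [hnn, Finset.mem_filter, Finset.mem_univ, true_and] at hv
      simp only [hon, Finset.mem_filter, Finset.mem_univ, true_and]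
      constructor
      · rcases lt_or_eq_of_le (hP0 v) with h | h
        · exact h
        · exfalso; rw [hQzero v h.symm] at hv; exact lt_irrefl _ hv.1
      · rcases lt_or_eq_of_le (hPbd v) with h | h
        · exact h
        · exfalso; rw [hQcap v h] at hv; exact lt_irrefl _ hv.2
    have hssub : newnc ⊂ oldnc := by
      rw [Finset.ssubset_iff_of_subset hsubnc]
      by_cases hc : (k:ℝ) * a ≤ 1 - (k:ℝ) * b
      · -- α = k*a, v₀ leaves
        have hαa : α = (k:ℝ) * a := min_eq_left hc
        refine ⟨v₀, ?_, ?_⟩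
        · simp only [hon, Finset.mem_filter, Finset.mem_univ, true_and]
          refine ⟨ha0, ?_⟩
          have : (k:ℝ) * a < 1 := by nlinarith
          rw [lt_div_iff₀ hkk]; linarith [mul_comm a (k:ℝ)]
        · simp only [hnn, Finset.mem_filter, Finset.mem_univ, true_and]
          rintro ⟨h1, _⟩
          have : Q v₀ = 0 := by
            simp only [hQ, hv₀S, if_true, hαa, ← ha]
            field_simp
            simp
          rw [this] at h1; exact lt_irrefl _ h1
      · -- α = 1 - k*b, v₁ reaches cap
        push_neg at hc
        have hαb : α = 1 - (k:ℝ) * b := min_eq_right (le_of_lt hc)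
        refine ⟨v₁, ?_, ?_⟩
        · simp only [hon, Finset.mem_filter, Finset.mem_univ, true_and]
          exact ⟨hb0, hbcap⟩
        · simp only [hnn, Finset.mem_filter, Finset.mem_univ, true_and]
          rintro ⟨_, h2⟩
          have : Q v₁ = 1/(k:ℝ) := by
            simp only [hQ, hv₁nS, if_false, mul_zero, sub_zero, hαb, ← hb]
            have hkb : (k:ℝ) * b ≠ 0 := by positivity
            field_simp
            ring
          rw [this] at h2; exact lt_irrefl _ h2
    have hcardlt : newnc.card < m := by
      rw [← hm]
      exact Finset.card_lt_card hssub
    obtain ⟨n, β, T', hβ0, hβsum, hTcard, hrep⟩ :=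
      ih newnc.card hcardlt Q rfl hQ0 hQsum hQbd
    refine ⟨n + 1, Fin.cons α (fun i => (1-α) * β i), Fin.cons S T', ?_, ?_, ?_, ?_⟩
    · intro i
      refine Fin.cases ?_ ?_ i
      · exact le_of_lt hα0
      · intro j; simp only [Fin.cons_succ]
        exact mul_nonneg (le_of_lt h1α) (hβ0 j)
    · rw [Fin.sum_cons, ← Finset.mul_sum, hβsum, mul_one]; ring
    · intro i
      refine Fin.cases ?_ ?_ i
      · simpa using hScard
      · intro j; simpa using hTcard j
    · intro v
      rw [Fin.sum_univ_succ]
      simp only [Fin.cons_succ, Fin.cons_zero]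
      have hQv : P v = α * (if v ∈ S then 1/(k:ℝ) else 0) + (1-α) * Q v := by
        simp only [hQ]
        field_simp
        ring
      rw [hScard, hQv, hrep v, Finset.mul_sum]
      congr 1
      apply Finset.sum_congr rfl
      intro j _
      ring

theorem stmt_18 {V : Type*} [Fintype V] (P : V → ℝ) (θ : ℝ)
    (hθ₀ : 0 < θ) (hθ₁ : θ ≤ 1)
    (hPpos : ∀ v, 0 ≤ P v) (hPsum : ∑ v, P v = 1) (hPbd : ∀ v, P v ≤ θ) :
    ∃ (n : ℕ) (α : Fin n → ℝ) (S : Fin n → Finset V),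
      (∀ i, 0 ≤ α i) ∧ (∑ i, α i = 1) ∧
      (∀ i, (S i).card = ⌊1/θ⌋₊) ∧
      (∀ v, P v = ∑ i, α i * (if v ∈ S i then (1 : ℝ) / (S i).card else 0)) := by
  set k := ⌊1/θ⌋₊ with hkdef
  have hk : 0 < k := by
    rw [hkdef]
    apply Nat.floor_pos.mpr
    rw [le_div_iff₀ hθ₀]; linarith
  have hθk : θ ≤ 1/(k:ℝ) := by
    have h1 : (k:ℝ) ≤ 1/θ := Nat.floor_le (by positivity)
    rw [le_div_iff₀ (by exact_mod_cast hk)]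
    calc θ * (k:ℝ) ≤ θ * (1/θ) := by
          apply mul_le_mul_of_nonneg_left h1 (le_of_lt hθ₀)
      _ = 1 := by field_simp
  exact aux_decomp k hk _ P rfl hPpos hPsum (fun v => le_trans (hPbd v) hθk)
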